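/- For a connected weighted graph, the rows of the matrix θ = √V_G · L^+ B^T W^{1/2} ∈ ℝ^{n×m} give a Euclidean embedding of the nodes in which the squared Euclidean distance between rows i and j equals the commute time: c(i,j) = ||θ^T(e_i - e_j)||². -/

import Mathlib

open Matrix BigOperators

/-- Uniqueness of the Moore–Penrose pseudoinverse. -/
lemma mp_unique {n : ℕ} (L X Y : Matrix (Fin n) (Fin n) ℝ)
    (hX1 : L * X * L = L) (hX2 : X * L * X = X)
    (hX3 : (L * X)ᵀ = L * X) (hX4 : (X * L)ᵀ = X * L)
    (hY1 : L * Y * L = L) (hY2 : Y * L * Y = Y)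
    (hY3 : (L * Y)ᵀ = L * Y) (hY4 : (Y * L)ᵀ = Y * L) : X = Y := by
  have hLX : L * X = L * Y := by
    calc L * X = (L * X)ᵀ := hX3.symm
    _ = Xᵀ * Lᵀ := by rw [Matrix.transpose_mul]
    _ = Xᵀ * (L * Y * L)ᵀ := by rw [hY1]
    _ = Xᵀ * (Lᵀ * (L * Y)ᵀ) := by rw [Matrix.transpose_mul]
    _ = (L * X)ᵀ * (L * Y)ᵀ := by simp only [Matrix.transpose_mul, Matrix.mul_assoc]
    _ = (L * X) * (L * Y) := by rw [hX3, hY3]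
    _ = (L * X * L) * Y := by noncomm_ring
    _ = L * Y := by rw [hX1]
  have hXL : X * L = Y * L := by
    calc X * L = (X * L)ᵀ := hX4.symm
    _ = Lᵀ * Xᵀ := by rw [Matrix.transpose_mul]
    _ = (L * Y * L)ᵀ * Xᵀ := by rw [hY1]
    _ = (Y * L)ᵀ * (X * L)ᵀ := by simp only [Matrix.transpose_mul, Matrix.mul_assoc]
    _ = (Y * L) * (X * L) := by rw [hX4, hY4]
    _ = Y * (L * X * L) := by noncomm_ring
    _ = Y * L := by rw [hX1]
  calc X = X * L * X := hX2.symm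
  _ = X * (L * Y) := by rw [Matrix.mul_assoc, hLX]
  _ = (X * L) * Y := by noncomm_ring
  _ = (Y * L) * Y := by rw [hXL]
  _ = Y := hY2

/-- For a connected weighted graph with incidence matrix `B`, diagonal
edge-weight matrix `W`, Laplacian `L = Bᵀ W B` with pseudoinverse `L⁺`, and
volume `V_G`, the rows of `θ = √V_G · L⁺ Bᵀ W^{1/2} ∈ ℝ^{n×m}` give a
Euclidean embedding of the nodes whose squared Euclidean distances are the
commute times: `c i j = ‖θᵀ (e_i - e_j)‖²`. -/
theorem commute_time_embedding_incidence {n m : ℕ}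
    (wt : Fin m → ℝ) (hwt : ∀ e, 0 < wt e)
    (B : Matrix (Fin m) (Fin n) ℝ)
    (hconn : ∀ i j : Fin n,
      Relation.ReflTransGen (fun a b => ∃ e, B e a ≠ 0 ∧ B e b ≠ 0) i j)
    (W : Matrix (Fin m) (Fin m) ℝ) (hW : W = Matrix.diagonal wt)
    (L : Matrix (Fin n) (Fin n) ℝ) (hL : L = Bᵀ * W * B)
    (Lp : Matrix (Fin n) (Fin n) ℝ)
    (hmp1 : L * Lp * L = L) (hmp2 : Lp * L * Lp = Lp)
    (hmp3 : (L * Lp)ᵀ = L * Lp) (hmp4 : (Lp * L)ᵀ = Lp * L)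
    (VG : ℝ) (hVG : 0 < VG)
    (θ : Matrix (Fin n) (Fin m) ℝ)
    (hθ : θ = Real.sqrt VG • (Lp * Bᵀ * Matrix.diagonal (fun e => Real.sqrt (wt e)))) :
    ∀ i j, VG * ((Pi.single i 1 - Pi.single j 1) ⬝ᵥ
        (Lp *ᵥ (Pi.single i 1 - Pi.single j 1))) =
      ∑ e, (θ i e - θ j e) ^ 2 := by
  -- L is symmetric
  have hLsym : Lᵀ = L := by
    rw [hL, hW]
    simp [Matrix.transpose_mul, Matrix.diagonal_transpose, Matrix.mul_assoc]
  -- Lpᵀ is also a Moore–Penrose pseudoinverse of L, hence Lp is symmetric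
  have hLpsym : Lpᵀ = Lp := by
    apply mp_unique L Lpᵀ Lp
    · calc L * Lpᵀ * L = (Lᵀ * Lp * Lᵀ)ᵀ := by
            simp [Matrix.transpose_mul, Matrix.mul_assoc]
      _ = L := by rw [hLsym, hmp1, hLsym]
    · calc Lpᵀ * L * Lpᵀ = (Lp * Lᵀ * Lp)ᵀ := by
            simp [Matrix.transpose_mul, Matrix.mul_assoc]
      _ = Lpᵀ := by rw [hLsym, hmp2]
    · calc (L * Lpᵀ)ᵀ = Lp * Lᵀ := by simp [Matrix.transpose_mul]
      _ = Lp * L := by rw [hLsym]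
      _ = (Lp * L)ᵀ := hmp4.symm
      _ = Lᵀ * Lpᵀ := by rw [Matrix.transpose_mul]
      _ = L * Lpᵀ := by rw [hLsym]
    · calc (Lpᵀ * L)ᵀ = Lᵀ * Lp := by simp [Matrix.transpose_mul]
      _ = L * Lp := by rw [hLsym]
      _ = (L * Lp)ᵀ := hmp3.symm
      _ = Lpᵀ * Lᵀ := by rw [Matrix.transpose_mul]
      _ = Lpᵀ * L := by rw [hLsym]
    all_goals assumption
  -- θ * θᵀ = VG • Lp
  have hDD : (Matrix.diagonal fun e => Real.sqrt (wt e)) *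
      (Matrix.diagonal fun e => Real.sqrt (wt e)) = W := by
    rw [Matrix.diagonal_mul_diagonal, hW]
    have : (fun i => Real.sqrt (wt i) * Real.sqrt (wt i)) = wt :=
      funext fun e => Real.mul_self_sqrt (hwt e).le
    rw [this]
  have hθθ : θ * θᵀ = VG • Lp := by
    rw [hθ]
    rw [Matrix.transpose_smul, Matrix.smul_mul, Matrix.mul_smul, smul_smul,
      Real.mul_self_sqrt hVG.le]
    congr 1
    calc (Lp * Bᵀ * Matrix.diagonal fun e => Real.sqrt (wt e)) *
          (Lp * Bᵀ * Matrix.diagonal fun e => Real.sqrt (wt e))ᵀ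
        = Lp * (Bᵀ * ((Matrix.diagonal fun e => Real.sqrt (wt e)) *
            (Matrix.diagonal fun e => Real.sqrt (wt e))) * B) * Lpᵀ := by
          simp only [Matrix.transpose_mul, Matrix.diagonal_transpose, Matrix.transpose_transpose, Matrix.mul_assoc]
    _ = Lp * L * Lp := by rw [hDD, ← hL, hLpsym]
    _ = Lp := hmp2
  intro i j
  set x : Fin n → ℝ := Pi.single i 1 - Pi.single j 1 with hx
  have hrow : ∀ e, θ i e - θ j e = (θᵀ *ᵥ x) e := by
    intro e
    simp [Matrix.mulVec, dotProduct, hx, Pi.single_apply, mul_sub,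
      Finset.sum_sub_distrib, mul_ite, mul_one, mul_zero]
  calc VG * (x ⬝ᵥ Lp *ᵥ x)
      = x ⬝ᵥ (VG • Lp) *ᵥ x := by
        rw [Matrix.smul_mulVec, dotProduct_smul, smul_eq_mul]
  _ = x ⬝ᵥ (θ * θᵀ) *ᵥ x := by rw [hθθ]
  _ = x ⬝ᵥ θ *ᵥ (θᵀ *ᵥ x) := by rw [Matrix.mulVec_mulVec]
  _ = (x ᵥ* θ) ⬝ᵥ (θᵀ *ᵥ x) := by rw [dotProduct_mulVec]
  _ = (θᵀ *ᵥ x) ⬝ᵥ (θᵀ *ᵥ x) := by rw [Matrix.mulVec_transpose]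
  _ = ∑ e, (θ i e - θ j e) ^ 2 := by
        simp only [dotProduct]
        exact Finset.sum_congr rfl fun e _ => by rw [hrow e]; ring
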